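/- Let F be an abelian field of conductor f_F and K ⊆ F a subfield (K ≠ ℚ) of conductor f_K, such that f_F and f_K have the same prime divisors. Then N_{F/K}(θ_F) = θ_K. -/

import Mathlib

/-- The normalized Stickelberger element `θ_F = -∑'_{0<a<f} (1/2 - a/f)·σ_a⁻¹` of an abelian
field `F` with Galois group `G` and conductor `f`, where the Artin symbol `a ↦ σ_a = (F/a)`
is encoded as a homomorphism `σ : (ZMod f)ˣ →* G`. -/
noncomputable def stickelberger (f : ℕ) [NeZero f] {G : Type*} [CommGroup G]
    (σ : (ZMod f)ˣ →* G) : MonoidAlgebra ℚ G :=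
  -∑ a : (ZMod f)ˣ,
    MonoidAlgebra.single ((σ a)⁻¹) ((1 : ℚ) / 2 - (((a : ZMod f).val : ℚ)) / (f : ℚ))

/-- `σ` is the Artin map of an abelian field whose conductor is exactly `f`: it is surjective
and does not factor through `(ZMod d)ˣ` for any proper divisor `d` of `f`. -/
def IsConductor (f : ℕ) [NeZero f] {G : Type*} [CommGroup G] (σ : (ZMod f)ˣ →* G) : Prop :=
  Function.Surjective σ ∧
    ∀ (d : ℕ) (hd : d ∣ f), (∀ a : (ZMod f)ˣ, ZMod.unitsMap hd a = 1 → σ a = 1) → d = f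

/-- The Frobenius (Artin symbol) of a rational prime `p` unramified in the abelian field with
Artin map `σ : (ZMod f)ˣ →* G` (and `1` if `p` divides `f`). -/
noncomputable def frob (f : ℕ) [NeZero f] {G : Type*} [CommGroup G] (σ : (ZMod f)ˣ →* G)
    (p : ℕ) : G :=
  if h : Nat.Coprime p f then σ (ZMod.unitOfCoprime p h) else 1

private lemma stickelberger_fiber_sum (fF fK : ℕ) [NeZero fF] [NeZero fK] (hK : 1 < fK)
    (hdvd : fK ∣ fF) (hprimes : fF.primeFactors = fK.primeFactors)
    (b : (ZMod fK)ˣ) :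
    ∑ a ∈ Finset.univ.filter (fun a : (ZMod fF)ˣ => ZMod.unitsMap hdvd a = b),
        ((1:ℚ)/2 - (((a : ZMod fF)).val : ℚ)/(fF:ℚ))
      = (1:ℚ)/2 - (((b : ZMod fK)).val : ℚ)/(fK:ℚ) := by
  classical
  have hfK0 : fK ≠ 0 := NeZero.ne fK
  have hfF0 : fF ≠ 0 := NeZero.ne fF
  have hfKpos : 0 < fK := Nat.pos_of_ne_zero hfK0
  obtain ⟨m, hmm⟩ := id hdvd
  have hm0 : 0 < m := by
    rcases Nat.eq_zero_or_pos m with h | h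
    · exact absurd (by rw [hmm, h, mul_zero]) hfF0
    · exact h
  have hco : ∀ x : ℕ, Nat.Coprime x fK → Nat.Coprime x fF := by
    intro x hx
    have hx0 : x ≠ 0 := by
      rintro rfl
      rw [Nat.coprime_zero_left] at hx
      omega
    rw [← Nat.disjoint_primeFactors hx0 hfF0, hprimes,
      Nat.disjoint_primeFactors hx0 hfK0]
    exact hx
  set B := ((b : ZMod fK)).val with hB
  have hBlt : B < fK := ZMod.val_lt _
  have hBco : Nat.Coprime B fK := ZMod.val_coe_unit_coprime b
  have hcop : ∀ k : ℕ, Nat.Coprime (B + k * fK) fF := by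
    intro k
    refine hco _ ?_
    rw [mul_comm, Nat.coprime_add_mul_left_left]
    exact hBco
  have hmod : ∀ a : (ZMod fF)ˣ, ZMod.unitsMap hdvd a = b →
      ((a : ZMod fF)).val % fK = B := by
    intro a ha
    have h1 : ((ZMod.unitsMap hdvd a : (ZMod fK)ˣ) : ZMod fK) = (b : ZMod fK) := by
      rw [ha]
    rw [ZMod.unitsMap_def] at h1
    simp only [Units.coe_map, MonoidHom.coe_coe, ZMod.castHom_apply] at h1
    rw [← ZMod.natCast_val] at h1
    have := congrArg ZMod.val h1
    rwa [ZMod.val_natCast] at this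
  rw [Finset.sum_nbij' (i := fun a : (ZMod fF)ˣ => ((a : ZMod fF)).val / fK)
    (j := fun k => ZMod.unitOfCoprime (B + k * fK) (hcop k))
    (t := Finset.range m)
    (g := fun k => (1:ℚ)/2 - (((B + k * fK : ℕ) : ℚ))/(fF:ℚ))]
  · -- final arithmetic sum
    have hgauss : (∑ k ∈ Finset.range m, (k:ℚ)) = ((m:ℚ) * ((m:ℚ)-1))/2 := by
      have h2 : (∑ i ∈ Finset.range m, i) * 2 = m * (m - 1) := Finset.sum_range_id_mul_two m
      have h3 := congrArg (Nat.cast : ℕ → ℚ) h2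
      push_cast [Nat.cast_sub (by omega : 1 ≤ m)] at h3
      linarith
    have hFQ : (fF : ℚ) = (fK : ℚ) * m := by rw [hmm]; push_cast; ring
    have hKQ : (fK : ℚ) ≠ 0 := Nat.cast_ne_zero.mpr hfK0
    have hmQ : (m : ℚ) ≠ 0 := Nat.cast_ne_zero.mpr hm0.ne'
    push_cast
    rw [Finset.sum_sub_distrib]
    simp only [Finset.sum_const, Finset.card_range, nsmul_eq_mul, ← Finset.sum_div,
      Finset.sum_add_distrib, Finset.sum_const, ← Finset.sum_mul, hgauss]
    rw [hFQ]
    field_simp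
    ring
  · intro a ha
    have hv : ((a : ZMod fF)).val < fF := ZMod.val_lt _
    refine Finset.mem_range.mpr ?_
    apply Nat.div_lt_of_lt_mul
    omega
  · intro k hk
    have hk' := Finset.mem_range.mp hk
    refine Finset.mem_filter.mpr ⟨Finset.mem_univ _, ?_⟩
    apply Units.ext
    have : ((ZMod.unitsMap hdvd (ZMod.unitOfCoprime (B + k * fK) (hcop k)) :
        (ZMod fK)ˣ) : ZMod fK) = (b : ZMod fK) := by
      rw [ZMod.unitsMap_def]
      simp only [Units.coe_map, MonoidHom.coe_coe]
      rw [ZMod.coe_unitOfCoprime, map_natCast]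
      push_cast [ZMod.natCast_self]
      simp only [mul_zero, add_zero]
      rw [hB, ZMod.natCast_val, ZMod.cast_id]
    exact this
  · intro a ha
    have hmem := Finset.mem_filter.mp ha
    have h1 := hmod a hmem.2
    apply Units.ext
    rw [ZMod.coe_unitOfCoprime]
    have : B + ((a : ZMod fF)).val / fK * fK = ((a : ZMod fF)).val := by
      conv_rhs => rw [← Nat.mod_add_div' ((a : ZMod fF)).val fK]
      rw [h1]
    rw [this, ZMod.natCast_val, ZMod.cast_id]
  · intro k hk
    have hk' := Finset.mem_range.mp hk
    have hlt : B + k * fK < fF := by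
      calc B + k * fK < fK + k * fK := by omega
        _ = (k+1) * fK := by ring
        _ ≤ m * fK := Nat.mul_le_mul_right _ (by omega)
        _ = fF := by rw [hmm, mul_comm]
    have hval : ((ZMod.unitOfCoprime (B + k * fK) (hcop k) : ZMod fF)).val = B + k * fK := by
      rw [ZMod.coe_unitOfCoprime, ZMod.val_natCast, Nat.mod_eq_of_lt hlt]
    rw [hval, Nat.add_mul_div_right _ _ hfKpos, Nat.div_eq_of_lt hBlt, zero_add]
  · intro a ha
    have hmem := Finset.mem_filter.mp ha
    have h1 := hmod a hmem.2
    congr 2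
    conv_lhs => rw [← Nat.mod_add_div' ((a : ZMod fF)).val fK, h1]


/-- If `f_F` and `f_K` have the same prime divisors, then `N_{F/K}(θ_F) = θ_K`. -/
theorem stickelberger_restriction_same_primes (fF fK : ℕ) [NeZero fF] [NeZero fK] (hK : 1 < fK)
    {GF GK : Type*} [CommGroup GF] [CommGroup GK]
    (σF : (ZMod fF)ˣ →* GF) (σK : (ZMod fK)ˣ →* GK)
    (hcondF : IsConductor fF σF) (hcondK : IsConductor fK σK)
    (hdvd : fK ∣ fF) (π : GF →* GK) (hπ : Function.Surjective π)
    (hcomp : ∀ a : (ZMod fF)ˣ, π (σF a) = σK (ZMod.unitsMap hdvd a))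
    (hprimes : fF.primeFactors = fK.primeFactors) :
    MonoidAlgebra.mapDomainRingHom ℚ π (stickelberger fF σF) = stickelberger fK σK := by
  classical
  rw [stickelberger, stickelberger, map_neg, map_sum]
  congr 1
  have hstep : ∀ a : (ZMod fF)ˣ,
      MonoidAlgebra.mapDomainRingHom ℚ π
        (MonoidAlgebra.single ((σF a)⁻¹)
          ((1 : ℚ) / 2 - (((a : ZMod fF).val : ℚ)) / (fF : ℚ)))
      = MonoidAlgebra.single ((σK (ZMod.unitsMap hdvd a))⁻¹)
          ((1 : ℚ) / 2 - (((a : ZMod fF).val : ℚ)) / (fF : ℚ)) := by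
    intro a
    show MonoidAlgebra.mapDomain (⇑π) (MonoidAlgebra.single _ _) = _
    rw [MonoidAlgebra.mapDomain_single]
    show MonoidAlgebra.single (π ((σF a)⁻¹)) _ = _
    rw [map_inv π, hcomp]
  calc ∑ a : (ZMod fF)ˣ, MonoidAlgebra.mapDomainRingHom ℚ π
        (MonoidAlgebra.single ((σF a)⁻¹)
          ((1 : ℚ) / 2 - (((a : ZMod fF).val : ℚ)) / (fF : ℚ)))
      = ∑ a : (ZMod fF)ˣ, MonoidAlgebra.single ((σK (ZMod.unitsMap hdvd a))⁻¹)
          ((1 : ℚ) / 2 - (((a : ZMod fF).val : ℚ)) / (fF : ℚ)) :=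
        Finset.sum_congr rfl fun a _ => hstep a
    _ = ∑ b : (ZMod fK)ˣ, ∑ a ∈ Finset.univ.filter
          (fun a : (ZMod fF)ˣ => ZMod.unitsMap hdvd a = b),
          MonoidAlgebra.single ((σK (ZMod.unitsMap hdvd a))⁻¹)
            ((1 : ℚ) / 2 - (((a : ZMod fF).val : ℚ)) / (fF : ℚ)) :=
        (Finset.sum_fiberwise _ _ _).symm
    _ = ∑ b : (ZMod fK)ˣ,
          MonoidAlgebra.single ((σK b)⁻¹)
            ((1 : ℚ) / 2 - (((b : ZMod fK).val : ℚ)) / (fK : ℚ)) := by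
        refine Finset.sum_congr rfl fun b _ => ?_
        have h1 : ∀ a ∈ Finset.univ.filter
            (fun a : (ZMod fF)ˣ => ZMod.unitsMap hdvd a = b),
            MonoidAlgebra.single ((σK (ZMod.unitsMap hdvd a))⁻¹)
              ((1 : ℚ) / 2 - (((a : ZMod fF).val : ℚ)) / (fF : ℚ))
            = MonoidAlgebra.single ((σK b)⁻¹)
              ((1 : ℚ) / 2 - (((a : ZMod fF).val : ℚ)) / (fF : ℚ)) := by
          intro a ha
          rw [(Finset.mem_filter.mp ha).2]
        rw [Finset.sum_congr rfl h1]
        have h2 : ∑ a ∈ Finset.univ.filter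
            (fun a : (ZMod fF)ˣ => ZMod.unitsMap hdvd a = b),
            MonoidAlgebra.single ((σK b)⁻¹)
              ((1 : ℚ) / 2 - (((a : ZMod fF).val : ℚ)) / (fF : ℚ))
            = MonoidAlgebra.single ((σK b)⁻¹)
              (∑ a ∈ Finset.univ.filter
                (fun a : (ZMod fF)ˣ => ZMod.unitsMap hdvd a = b),
                ((1 : ℚ) / 2 - (((a : ZMod fF).val : ℚ)) / (fF : ℚ))) :=
          (map_sum (MonoidAlgebra.singleAddHom ((σK b)⁻¹)) _ _).symm
        rw [h2, stickelberger_fiber_sum fF fK hK hdvd hprimes b]
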